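/- Let T > 0, r > q ≥ 0, σ > 0, h ∈ ℝ, θ ∈ (0,1), and let G ∈ (0,1) be the unique solution of ln G = qT/G − rT. With α = α^g(t,u,x) = (t/u)·ln x − ((u² − t²)/(2u))·(r − q + σ²/2) and β = β^g(t,u) = (σ/(u·√3))·√(u³ − t³), define E(t, x, u, y) = e^{−q(u−t)}·(1/u)·[ ((−q·u + y·r·u + y·ln y + y·β²)/β)·φ((ln y − α)/β) − e^{α + β²/2}·(r·u + α + β² + 1)·Φ((ln y − α)/β − β) ]·(t/(u·x)). Then lim_{τ→0⁺} E(T−τ, G·(1 + hσ·√τ), T−τ(1−θ), G·(1 + hσ·√τ·√(1−θ))) = (q/G + 1/T)·( −Φ(−h·(1−√(1−θ))/√θ) + h·(√(1−θ)/√θ)·φ(−h·(1−√(1−θ))/√θ) ). -/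

import Mathlib

open MeasureTheory Real Filter Topology

/-- The standard normal cumulative distribution function. -/
noncomputable def stdNormalCDF (x : ℝ) : ℝ :=
  ∫ s in Set.Iic x, (Real.sqrt (2 * Real.pi))⁻¹ * Real.exp (-s ^ 2 / 2)

/-- The standard normal density `φ(x) = (2π)^{−1/2} e^{−x²/2}`. -/
noncomputable def stdNormalPDF (x : ℝ) : ℝ :=
  (Real.sqrt (2 * Real.pi))⁻¹ * Real.exp (-x ^ 2 / 2)

/-- `α^g(t,u,x) = (t/u)·ln x − ((u²−t²)/(2u))·(r−q+σ²/2)`. -/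
noncomputable def alphaG (r q σ t u x : ℝ) : ℝ :=
  (t / u) * Real.log x - ((u ^ 2 - t ^ 2) / (2 * u)) * (r - q + σ ^ 2 / 2)

/-- `β^g(t,u) = (σ/(u√3))·√(u³−t³)`. -/
noncomputable def betaG (σ t u : ℝ) : ℝ :=
  (σ / (u * Real.sqrt 3)) * Real.sqrt (u ^ 3 - t ^ 3)

/-- The integrand of the `x`-derivative of the American early exercise bonus premium
for the geometrically averaged Asian call:
`E(t,x,u,y) = e^{−q(u−t)}·(1/u)·[ ((−qu + yru + y ln y + yβ²)/β)·φ((ln y − α)/β)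
  − e^{α+β²/2}·(ru + α + β² + 1)·Φ((ln y − α)/β − β) ]·(t/(u·x))`,
where `α = α^g(t,u,x)` and `β = β^g(t,u)`. -/
noncomputable def eHatG (r q σ t x u y : ℝ) : ℝ :=
  Real.exp (-q * (u - t)) * (1 / u) *
    (((-q * u + y * r * u + y * Real.log y + y * (betaG σ t u) ^ 2) / betaG σ t u)
        * stdNormalPDF ((Real.log y - alphaG r q σ t u x) / betaG σ t u)
      - Real.exp (alphaG r q σ t u x + (betaG σ t u) ^ 2 / 2)
          * (r * u + alphaG r q σ t u x + (betaG σ t u) ^ 2 + 1)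
          * stdNormalCDF ((Real.log y - alphaG r q σ t u x) / betaG σ t u - betaG σ t u))
    * (t / (u * x))

lemma integrable_stdpdf : Integrable (fun s : ℝ => (Real.sqrt (2 * Real.pi))⁻¹ * Real.exp (-s ^ 2 / 2)) := by
  have h := (integrable_exp_neg_mul_sq (by norm_num : (0:ℝ) < 1/2)).const_mul (Real.sqrt (2 * Real.pi))⁻¹
  convert h using 2 with s
  ring_nf

lemma continuous_stdNormalCDF : Continuous stdNormalCDF := by
  have key : stdNormalCDF = fun x => (∫ s in (0:ℝ)..x, (Real.sqrt (2 * Real.pi))⁻¹ * Real.exp (-s ^ 2 / 2)) + stdNormalCDF 0 := by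
    funext x
    have := intervalIntegral.integral_Iic_sub_Iic (integrable_stdpdf.integrableOn (s := Set.Iic 0)) (integrable_stdpdf.integrableOn (s := Set.Iic x))
    unfold stdNormalCDF
    linarith [this]
  rw [key]
  exact (integrable_stdpdf.continuous_primitive 0).add continuous_const

lemma continuous_stdNormalPDF : Continuous stdNormalPDF := by
  unfold stdNormalPDF
  fun_prop

lemma tendsto_log_one_add (k : ℝ) :
    Tendsto (fun s : ℝ => Real.log (1 + k * s) / s) (𝓝[>] 0) (𝓝 k) := by
  rcases eq_or_ne k 0 with rfl | hk
  · simp only [zero_mul, add_zero, Real.log_one, zero_div]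
    exact tendsto_const_nhds
  · have hinner : HasDerivAt (fun v : ℝ => 1 + v) 1 0 := by
      simpa using ((hasDerivAt_id (0:ℝ)).const_add 1)
    have hd : HasDerivAt (fun v : ℝ => Real.log (1 + v)) 1 0 := by
      have hl : HasDerivAt Real.log 1⁻¹ (1 + (0:ℝ)) := by
        simpa using Real.hasDerivAt_log (x := (1:ℝ)) one_ne_zero
      exact (hl.comp 0 hinner).congr_deriv (by norm_num)
    have h1 : Tendsto (fun v : ℝ => Real.log (1 + v) / v) (𝓝[≠] 0) (𝓝 1) := by
      have := hasDerivAt_iff_tendsto_slope.mp hd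
      refine this.congr (fun v => ?_)
      simp [slope_def_field]
    have h2 : Tendsto (fun s : ℝ => k * s) (𝓝[>] 0) (𝓝[≠] 0) := by
      apply tendsto_nhdsWithin_of_tendsto_nhds_of_eventually_within
      · have : Tendsto (fun s : ℝ => k * s) (𝓝 0) (𝓝 (k * 0)) :=
          (continuous_const.mul continuous_id).tendsto 0
        rw [mul_zero] at this
        exact this.mono_left nhdsWithin_le_nhds
      · filter_upwards [self_mem_nhdsWithin] with s hs
        exact mul_ne_zero hk (ne_of_gt hs)
    have h3 := (h1.comp h2).const_mul k
    rw [mul_one] at h3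
    refine h3.congr' ?_
    filter_upwards [self_mem_nhdsWithin] with s hs
    have hs' : s ≠ 0 := ne_of_gt hs
    simp only [Function.comp]
    field_simp

noncomputable def Bfun (σ T θ : ℝ) (s : ℝ) : ℝ :=
  σ / ((T - s^2*(1-θ)) * Real.sqrt 3) *
    Real.sqrt (θ * ((T - s^2*(1-θ))^2 + (T - s^2*(1-θ))*(T - s^2) + (T - s^2)^2))

noncomputable def Afun (r q σ T G h θ : ℝ) (s : ℝ) : ℝ :=
  s*θ*Real.log G/(T - s^2*(1-θ)) + Real.log (1 + h*σ*s*Real.sqrt (1-θ))/s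
    - ((T - s^2)/(T - s^2*(1-θ)))*(Real.log (1 + h*σ*s)/s)
    + s*θ*((T - s^2*(1-θ)) + (T - s^2))*(r - q + σ^2/2)/(2*(T - s^2*(1-θ)))

noncomputable def Mfun (r q σ T G h θ : ℝ) (s : ℝ) : ℝ :=
  q*T*(h*σ*Real.sqrt (1-θ)) + q*s*(1-θ)
    - (G*(1+h*σ*s*Real.sqrt (1-θ)))*r*s*(1-θ)
    + (G*(1+h*σ*s*Real.sqrt (1-θ)))*(Real.log (1 + h*σ*s*Real.sqrt (1-θ))/s)
    + (G*(1+h*σ*s*Real.sqrt (1-θ)))*s*(Bfun σ T θ s)^2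

lemma pos_one_add (a s : ℝ) (hs : 0 < s) (hlt : s < 1/(1+|a|)) : 0 < 1 + a*s := by
  have h1 : |a * s| = |a| * s := by rw [abs_mul, abs_of_pos hs]
  have h2 : |a| * s < 1 := by
    have hle : |a| * s ≤ |a| * (1/(1+|a|)) := mul_le_mul_of_nonneg_left hlt.le (abs_nonneg a)
    have hlt1 : |a| * (1/(1+|a|)) < 1 := by
      rw [mul_one_div, div_lt_one (by positivity)]
      linarith [abs_nonneg a]
    linarith
  nlinarith [neg_abs_le (a*s)]
/-- With `G ∈ (0,1)` the unique root of `ln G = qT/G − rT`, `h ∈ ℝ`, `θ ∈ (0,1)`: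
`lim_{τ→0⁺} E(T−τ, G(1+hσ√τ), T−τ(1−θ), G(1+hσ√τ√(1−θ)))
  = (q/G + 1/T)·(−Φ(−h(1−√(1−θ))/√θ) + h(√(1−θ)/√θ)φ(−h(1−√(1−θ))/√θ))`. -/
theorem tendsto_eHatG (r q σ T G h θ : ℝ) (hσ : 0 < σ) (hT : 0 < T)
    (hq : 0 ≤ q) (hrq : q < r) (hG0 : 0 < G) (hG1 : G < 1)
    (hGeq : Real.log G = q * T / G - r * T) (hθ : θ ∈ Set.Ioo (0:ℝ) 1) :
    Tendsto (fun τ : ℝ =>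
        eHatG r q σ (T - τ) (G * (1 + h * σ * Real.sqrt τ)) (T - τ * (1 - θ))
          (G * (1 + h * σ * Real.sqrt τ * Real.sqrt (1 - θ))))
      (𝓝[>] 0)
      (𝓝 ((q / G + 1 / T) *
        (-stdNormalCDF (-h * (1 - Real.sqrt (1 - θ)) / Real.sqrt θ)
          + h * (Real.sqrt (1 - θ) / Real.sqrt θ)
              * stdNormalPDF (-h * (1 - Real.sqrt (1 - θ)) / Real.sqrt θ)))) := by
  obtain ⟨hθ0, hθ1⟩ := hθ
  have h1θ : (0:ℝ) < 1 - θ := by linarith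
  have hw : 0 < Real.sqrt (1 - θ) := Real.sqrt_pos.mpr h1θ
  have hv : 0 < Real.sqrt θ := Real.sqrt_pos.mpr hθ0
  have h3 : (0:ℝ) < Real.sqrt 3 := Real.sqrt_pos.mpr (by norm_num)
  set l := 𝓝[>] (0:ℝ) with hldef
  -- Step 1: substitute s = √τ
  suffices hF : Tendsto (fun s : ℝ =>
      eHatG r q σ (T - s^2) (G * (1 + h * σ * s)) (T - s^2 * (1 - θ))
        (G * (1 + h * σ * s * Real.sqrt (1 - θ)))) l
      (𝓝 ((q / G + 1 / T) *
        (-stdNormalCDF (-h * (1 - Real.sqrt (1 - θ)) / Real.sqrt θ)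
          + h * (Real.sqrt (1 - θ) / Real.sqrt θ)
              * stdNormalPDF (-h * (1 - Real.sqrt (1 - θ)) / Real.sqrt θ)))) by
    have hsq : Tendsto Real.sqrt l l := by
      rw [hldef]
      apply tendsto_nhdsWithin_of_tendsto_nhds_of_eventually_within
      · have : Tendsto Real.sqrt (𝓝 0) (𝓝 (Real.sqrt 0)) := Real.continuous_sqrt.tendsto 0
        rw [Real.sqrt_zero] at this
        exact this.mono_left nhdsWithin_le_nhds
      · filter_upwards [self_mem_nhdsWithin] with τ hτ
        exact Real.sqrt_pos.mpr hτ
    refine (hF.comp hsq).congr' ?_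
    filter_upwards [self_mem_nhdsWithin] with τ hτ
    simp only [Function.comp]
    rw [Real.sq_sqrt (le_of_lt hτ)]
  -- basic limits
  have hsl : Tendsto (fun s : ℝ => s) l (𝓝 0) :=
    (tendsto_id (α := ℝ) (x := l)).mono_right nhdsWithin_le_nhds
  have htf : Tendsto (fun s : ℝ => T - s^2) l (𝓝 T) := by
    have := (tendsto_const_nhds (x := T) (f := l)).sub (hsl.pow 2)
    simpa using this
  have huf : Tendsto (fun s : ℝ => T - s^2*(1-θ)) l (𝓝 T) := by
    have := (tendsto_const_nhds (x := T) (f := l)).sub ((hsl.pow 2).mul (tendsto_const_nhds (x := 1-θ)))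
    simpa using this
  have hxf : Tendsto (fun s : ℝ => G * (1 + h * σ * s)) l (𝓝 G) := by
    have := (tendsto_const_nhds (x := G) (f := l)).mul
      ((tendsto_const_nhds (x := (1:ℝ))).add ((tendsto_const_nhds (x := h*σ)).mul hsl))
    simpa using this
  have hyf : Tendsto (fun s : ℝ => G * (1 + h * σ * s * Real.sqrt (1-θ))) l (𝓝 G) := by
    have := (tendsto_const_nhds (x := G) (f := l)).mul
      ((tendsto_const_nhds (x := (1:ℝ))).add
        (((tendsto_const_nhds (x := h*σ)).mul hsl).mul (tendsto_const_nhds (x := Real.sqrt (1-θ)))))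
    simpa using this
  have hL1 : Tendsto (fun s : ℝ => Real.log (1 + h*σ*s)/s) l (𝓝 (h*σ)) :=
    tendsto_log_one_add (h*σ)
  have hL2 : Tendsto (fun s : ℝ => Real.log (1 + h*σ*s*Real.sqrt (1-θ))/s) l (𝓝 (h*σ*Real.sqrt (1-θ))) := by
    have := tendsto_log_one_add (h*σ*Real.sqrt (1-θ))
    refine this.congr (fun s => ?_)
    rw [show h*σ*Real.sqrt (1-θ)*s = h*σ*s*Real.sqrt (1-θ) from by ring]
  -- B limit
  have hBf : Tendsto (Bfun σ T θ) l (𝓝 (σ * Real.sqrt θ)) := by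
    unfold Bfun
    have h1 : Tendsto (fun s : ℝ => σ / ((T - s^2*(1-θ)) * Real.sqrt 3)) l
        (𝓝 (σ / (T * Real.sqrt 3))) :=
      tendsto_const_nhds.div (huf.mul tendsto_const_nhds) (by positivity)
    have h2 : Tendsto (fun s : ℝ =>
        Real.sqrt (θ * ((T - s^2*(1-θ))^2 + (T - s^2*(1-θ))*(T - s^2) + (T - s^2)^2))) l
        (𝓝 (Real.sqrt (θ * (T^2 + T*T + T^2)))) :=
      (Real.continuous_sqrt.tendsto _).comp
        (tendsto_const_nhds.mul (((huf.pow 2).add (huf.mul htf)).add (htf.pow 2)))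
    have h4 := h1.mul h2
    convert h4 using 2
    rw [show θ * (T^2 + T*T + T^2) = (θ*3)*T^2 from by ring,
      Real.sqrt_mul (by positivity) (T^2), Real.sqrt_sq hT.le,
      Real.sqrt_mul hθ0.le 3]
    field_simp
  have hsB : Tendsto (fun s : ℝ => s * Bfun σ T θ s) l (𝓝 0) := by
    have := hsl.mul hBf
    simpa using this
  -- A limit and argument limit
  have hAf : Tendsto (Afun r q σ T G h θ) l (𝓝 (h*σ*Real.sqrt (1-θ) - h*σ)) := by
    unfold Afun
    have p1 : Tendsto (fun s : ℝ => s*θ*Real.log G/(T - s^2*(1-θ))) l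
        (𝓝 (0*θ*Real.log G/T)) :=
      ((hsl.mul tendsto_const_nhds).mul tendsto_const_nhds).div huf hT.ne'
    have p3 : Tendsto (fun s : ℝ => ((T - s^2)/(T - s^2*(1-θ)))*(Real.log (1 + h*σ*s)/s)) l
        (𝓝 ((T/T)*(h*σ))) := (htf.div huf hT.ne').mul hL1
    have p4 : Tendsto (fun s : ℝ =>
        s*θ*((T - s^2*(1-θ)) + (T - s^2))*(r - q + σ^2/2)/(2*(T - s^2*(1-θ)))) l
        (𝓝 (0*θ*(T+T)*(r - q + σ^2/2)/(2*T))) :=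
      (((hsl.mul tendsto_const_nhds).mul (huf.add htf)).mul tendsto_const_nhds).div
        (tendsto_const_nhds.mul huf) (by positivity)
    have := ((p1.add hL2).sub p3).add p4
    convert this using 2
    field_simp
    ring
  have hAB : Tendsto (fun s : ℝ => Afun r q σ T G h θ s / Bfun σ T θ s) l
      (𝓝 (-h * (1 - Real.sqrt (1 - θ)) / Real.sqrt θ)) := by
    have := hAf.div hBf (by positivity)
    convert this using 2
    · rfl
    rw [div_eq_div_iff hv.ne' (by positivity)]
    ring
  -- M limit
  have hMf : Tendsto (Mfun r q σ T G h θ) l (𝓝 ((q*T + G)*(h*σ*Real.sqrt (1-θ)))) := by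
    unfold Mfun
    have p2 : Tendsto (fun s : ℝ => q*s*(1-θ)) l (𝓝 (q*0*(1-θ))) :=
      ((tendsto_const_nhds (x := q)).mul hsl).mul tendsto_const_nhds
    have p3 : Tendsto (fun s : ℝ => (G*(1+h*σ*s*Real.sqrt (1-θ)))*r*s*(1-θ)) l
        (𝓝 (G*r*0*(1-θ))) :=
      (((hyf.mul tendsto_const_nhds).mul hsl).mul tendsto_const_nhds)
    have p4 : Tendsto (fun s : ℝ =>
        (G*(1+h*σ*s*Real.sqrt (1-θ)))*(Real.log (1 + h*σ*s*Real.sqrt (1-θ))/s)) l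
        (𝓝 (G*(h*σ*Real.sqrt (1-θ)))) := hyf.mul hL2
    have p5 : Tendsto (fun s : ℝ => (G*(1+h*σ*s*Real.sqrt (1-θ)))*s*(Bfun σ T θ s)^2) l
        (𝓝 (G*0*(σ*Real.sqrt θ)^2)) := (hyf.mul hsl).mul (hBf.pow 2)
    have := ((((tendsto_const_nhds (x := q*T*(h*σ*Real.sqrt (1-θ)))).add p2).sub p3).add p4).add p5
    convert this using 2
    ring
  have hMB : Tendsto (fun s : ℝ => Mfun r q σ T G h θ s / Bfun σ T θ s) l
      (𝓝 ((q*T + G)*(h*(Real.sqrt (1-θ)/Real.sqrt θ)))) := by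
    have := hMf.div hBf (by positivity)
    convert this using 2
    · rfl
    rw [eq_div_iff (by positivity), div_eq_mul_inv]
    have := mul_inv_cancel₀ hv.ne'
    linear_combination (q*T+G)*h*σ*Real.sqrt (1-θ) * this
  -- alpha limit
  have hαf : Tendsto (fun s : ℝ =>
      alphaG r q σ (T - s^2) (T - s^2*(1-θ)) (G * (1 + h * σ * s))) l (𝓝 (Real.log G)) := by
    simp only [alphaG]
    have hlog : Tendsto (fun s : ℝ => Real.log (G * (1 + h * σ * s))) l (𝓝 (Real.log G)) :=
      (Real.continuousAt_log hG0.ne').tendsto.comp hxf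
    have h1 : Tendsto (fun s : ℝ => ((T - s^2)/(T - s^2*(1-θ))) * Real.log (G * (1 + h * σ * s))) l
        (𝓝 ((T/T) * Real.log G)) := (htf.div huf hT.ne').mul hlog
    have h2 : Tendsto (fun s : ℝ =>
        (((T - s^2*(1-θ))^2 - (T - s^2)^2)/(2*(T - s^2*(1-θ)))) * (r - q + σ^2/2)) l
        (𝓝 (((T^2 - T^2)/(2*T)) * (r - q + σ^2/2))) :=
      (((huf.pow 2).sub (htf.pow 2)).div (tendsto_const_nhds.mul huf) (by positivity)).mul
        tendsto_const_nhds
    have := h1.sub h2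
    convert this using 2
    field_simp
    ring
  -- exp term limit
  have hexpG : Tendsto (fun s : ℝ =>
      Real.exp (alphaG r q σ (T - s^2) (T - s^2*(1-θ)) (G * (1 + h * σ * s))
        + (s * Bfun σ T θ s)^2/2)) l (𝓝 G) := by
    have harg : Tendsto (fun s : ℝ =>
        alphaG r q σ (T - s^2) (T - s^2*(1-θ)) (G * (1 + h * σ * s))
          + (s * Bfun σ T θ s)^2/2) l (𝓝 (Real.log G + 0^2/2)) :=
      hαf.add ((hsB.pow 2).div_const 2)
    have := (Real.continuous_exp.tendsto _).comp harg
    rw [show (0:ℝ)^2/2 = 0 from by norm_num, add_zero, Real.exp_log hG0] at this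
    exact this
  -- middle factor limit
  have hmid : Tendsto (fun s : ℝ =>
      r * (T - s^2*(1-θ)) + alphaG r q σ (T - s^2) (T - s^2*(1-θ)) (G * (1 + h * σ * s))
        + (s * Bfun σ T θ s)^2 + 1) l (𝓝 (q*T/G + 1)) := by
    have := (((tendsto_const_nhds (x := r)).mul huf).add hαf).add (hsB.pow 2) |>.add
      (tendsto_const_nhds (x := (1:ℝ)))
    convert this using 2
    rw [hGeq]
    ring
  -- cdf and pdf limits
  have hcdf : Tendsto (fun s : ℝ =>
      stdNormalCDF (Afun r q σ T G h θ s / Bfun σ T θ s - s * Bfun σ T θ s)) l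
      (𝓝 (stdNormalCDF (-h * (1 - Real.sqrt (1 - θ)) / Real.sqrt θ))) := by
    have harg := hAB.sub hsB
    rw [sub_zero] at harg
    exact (continuous_stdNormalCDF.tendsto _).comp harg
  have hpdf : Tendsto (fun s : ℝ =>
      stdNormalPDF (Afun r q σ T G h θ s / Bfun σ T θ s)) l
      (𝓝 (stdNormalPDF (-h * (1 - Real.sqrt (1 - θ)) / Real.sqrt θ))) :=
    (continuous_stdNormalPDF.tendsto _).comp hAB
  -- prefactor and ratio
  have hpre : Tendsto (fun s : ℝ =>
      Real.exp (-q * ((T - s^2*(1-θ)) - (T - s^2))) * (1 / (T - s^2*(1-θ)))) l (𝓝 (1/T)) := by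
    have h1 : Tendsto (fun s : ℝ => Real.exp (-q * ((T - s^2*(1-θ)) - (T - s^2)))) l
        (𝓝 (Real.exp (-q * (T - T)))) :=
      (Real.continuous_exp.tendsto _).comp (tendsto_const_nhds.mul (huf.sub htf))
    have h2 : Tendsto (fun s : ℝ => 1 / (T - s^2*(1-θ))) l (𝓝 (1/T)) :=
      tendsto_const_nhds.div huf hT.ne'
    have := h1.mul h2
    convert this using 2
    simp
  have hratio : Tendsto (fun s : ℝ =>
      (T - s^2) / ((T - s^2*(1-θ)) * (G * (1 + h * σ * s)))) l (𝓝 (1/G)) := by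
    have := htf.div (huf.mul hxf) (by positivity)
    convert this using 2
    · rfl
    rw [← div_div, div_self hT.ne']
  -- combine
  have hcomb := (hpre.mul ((hMB.mul hpdf).sub ((hexpG.mul hmid).mul hcdf))).mul hratio
  have hval : 1/T * ((q*T + G)*(h*(Real.sqrt (1-θ)/Real.sqrt θ))
        * stdNormalPDF (-h * (1 - Real.sqrt (1 - θ)) / Real.sqrt θ)
      - G*(q*T/G + 1) * stdNormalCDF (-h * (1 - Real.sqrt (1 - θ)) / Real.sqrt θ)) * (1/G)
      = (q / G + 1 / T) *
        (-stdNormalCDF (-h * (1 - Real.sqrt (1 - θ)) / Real.sqrt θ)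
          + h * (Real.sqrt (1 - θ) / Real.sqrt θ)
              * stdNormalPDF (-h * (1 - Real.sqrt (1 - θ)) / Real.sqrt θ)) := by
    field_simp
    ring
  rw [hval] at hcomb
  refine hcomb.congr' ?_
  -- eventual equality
  set δ := min (Real.sqrt T) (min (1/(1+|h*σ|)) (1/(1+|h*σ*Real.sqrt (1-θ)|))) with hδdef
  have hδ : 0 < δ := by positivity
  filter_upwards [Ioo_mem_nhdsGT_of_mem (Set.left_mem_Ico.mpr hδ)] with s hs
  obtain ⟨hs0, hsδ⟩ := hs
  have hsT : s^2 < T := by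
    have h1 : s < Real.sqrt T := lt_of_lt_of_le hsδ (min_le_left _ _)
    nlinarith [Real.mul_self_sqrt hT.le, Real.sqrt_nonneg T]
  have ht0 : 0 < T - s^2 := by linarith
  have hu0 : 0 < T - s^2*(1-θ) := by nlinarith [sq_nonneg s, mul_nonneg (sq_nonneg s) hθ0.le]
  have hx1 : 0 < 1 + h*σ*s := by
    refine pos_one_add _ _ hs0 ?_
    exact lt_of_lt_of_le hsδ (le_trans (min_le_right _ _) (min_le_left _ _))
  have hy1 : 0 < 1 + h*σ*s*Real.sqrt (1-θ) := by
    rw [show h*σ*s*Real.sqrt (1-θ) = (h*σ*Real.sqrt (1-θ))*s from by ring]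
    refine pos_one_add _ _ hs0 ?_
    exact lt_of_lt_of_le hsδ (le_trans (min_le_right _ _) (min_le_right _ _))
  -- key identities
  have hbeta : betaG σ (T - s^2) (T - s^2*(1-θ)) = s * Bfun σ T θ s := by
    unfold betaG Bfun
    rw [show (T - s^2*(1-θ))^3 - (T - s^2)^3
        = s^2 * (θ * ((T - s^2*(1-θ))^2 + (T - s^2*(1-θ))*(T - s^2) + (T - s^2)^2)) from by ring]
    rw [Real.sqrt_mul (sq_nonneg s), Real.sqrt_sq hs0.le]
    ring
  have hii : Real.log (G * (1 + h * σ * s * Real.sqrt (1 - θ)))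
      - alphaG r q σ (T - s^2) (T - s^2*(1-θ)) (G * (1 + h * σ * s))
      = s * Afun r q σ T G h θ s := by
    unfold alphaG Afun
    rw [Real.log_mul hG0.ne' hy1.ne', Real.log_mul hG0.ne' hx1.ne']
    field_simp
    ring
  have hiii : -q * (T - s^2*(1-θ))
      + G * (1 + h * σ * s * Real.sqrt (1 - θ)) * r * (T - s^2*(1-θ))
      + G * (1 + h * σ * s * Real.sqrt (1 - θ)) * Real.log (G * (1 + h * σ * s * Real.sqrt (1 - θ)))
      + G * (1 + h * σ * s * Real.sqrt (1 - θ)) * (s * Bfun σ T θ s)^2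
      = s * Mfun r q σ T G h θ s := by
    unfold Mfun
    rw [Real.log_mul hG0.ne' hy1.ne', hGeq]
    field_simp
    ring
  simp only [eHatG]
  rw [hbeta, hiii, hii, mul_div_mul_left _ _ hs0.ne', mul_div_mul_left _ _ hs0.ne']
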